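/- Under arbitrary dependence, the Benjamini–Yekutieli procedure with thresholds λ_j = αj/(m·H_m), where H_m = Σ_{l=1}^m 1/l, applied as a step-up rule to m values whose null components are super uniform, controls the false discovery rate at level at most (m₀/m)·α. -/

import Mathlib

open MeasureTheory ProbabilityTheory

/-- Abel-summation style bound used in the BY proof (strengthened induction form). -/
lemma by_abel_aux (c : ℝ) (a : ℕ → ℝ) (m : ℕ)
    (hb : ∀ k, 1 ≤ k → k ≤ m → a k ≤ c * k) :
    ∀ n, 1 ≤ n → n ≤ m →
      a 1 + ∑ k ∈ Finset.Icc 2 n, (a k - a (k - 1)) / k ≤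
        c * (∑ l ∈ Finset.Icc 1 n, (1 : ℝ) / l - 1) + a n / n := by
  intro n hn
  induction n, hn using Nat.le_induction with
  | base =>
    intro _
    norm_num
  | succ n hn ih =>
    intro hnm
    have hn' : n ≤ m := by omega
    have IH := ih hn'
    have hx : (0 : ℝ) < n := by exact_mod_cast hn
    have hx1 : (0 : ℝ) < (n : ℝ) + 1 := by linarith
    have han : a n ≤ c * n := hb n hn hn'
    have hsum2 : ∑ k ∈ Finset.Icc 2 (n + 1), (a k - a (k - 1)) / k =
        (∑ k ∈ Finset.Icc 2 n, (a k - a (k - 1)) / k) +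
          (a (n + 1) - a n) / ((n : ℝ) + 1) := by
      rw [Finset.sum_Icc_succ_top (by omega : 2 ≤ n + 1)]
      push_cast [Nat.add_sub_cancel]
      ring
    have hsum1 : ∑ l ∈ Finset.Icc 1 (n + 1), (1 : ℝ) / l =
        (∑ l ∈ Finset.Icc 1 n, (1 : ℝ) / l) + 1 / ((n : ℝ) + 1) := by
      rw [Finset.sum_Icc_succ_top (by omega : 1 ≤ n + 1)]
      push_cast
      ring
    have key : a n / n - a n / ((n : ℝ) + 1) ≤ c / ((n : ℝ) + 1) := by
      have e : a n / n - a n / ((n : ℝ) + 1) = a n / ((n : ℝ) * ((n : ℝ) + 1)) := by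
        field_simp
        ring
      rw [e, div_le_div_iff₀ (by positivity) hx1]
      nlinarith [mul_le_mul_of_nonneg_right han (le_of_lt hx1)]
    have hsub : (a (n + 1) - a n) / ((n : ℝ) + 1) =
        a (n + 1) / ((n : ℝ) + 1) - a n / ((n : ℝ) + 1) := sub_div _ _ _
    push_cast
    rw [hsum2, hsum1]
    have hexp : c * ((∑ l ∈ Finset.Icc 1 n, (1 : ℝ) / l) + 1 / ((n : ℝ) + 1) - 1) =
        c * ((∑ l ∈ Finset.Icc 1 n, (1 : ℝ) / l) - 1) + c / ((n : ℝ) + 1) := by ring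
    linarith [IH, key, hsub, hexp]

/-- The final Abel bound. -/
lemma by_abel (c : ℝ) (a : ℕ → ℝ) (m : ℕ) (hm : 1 ≤ m)
    (hb : ∀ k, 1 ≤ k → k ≤ m → a k ≤ c * k) :
    a 1 + ∑ k ∈ Finset.Icc 2 m, (a k - a (k - 1)) / k ≤
      c * ∑ l ∈ Finset.Icc 1 m, (1 : ℝ) / l := by
  have h := by_abel_aux c a m hb m hm le_rfl
  have hx : (0 : ℝ) < m := by exact_mod_cast hm
  have ham : a m / m ≤ c := by
    rw [div_le_iff₀ hx]
    exact hb m hm le_rfl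
  linarith [h, ham, (by ring : c * ((∑ l ∈ Finset.Icc 1 m, (1:ℝ)/l) - 1) = c * (∑ l ∈ Finset.Icc 1 m, (1:ℝ)/l) - c)]

/-- Step-up index: `j* = sup {j : 1 ≤ j ≤ m, q_(j) ≤ λ_j}` (with `j* = 0` if empty),
where `q_(j)` is the `j`-th order statistic of `q`. -/
noncomputable def stepUpIndex {m : ℕ} (q : Fin m → ℝ) (lam : ℕ → ℝ) : ℕ :=
  sSup {j | ∃ h : j - 1 < m, 0 < j ∧ q (Tuple.sort q ⟨j - 1, h⟩) ≤ lam j}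

/-- Index `i` is rejected by the step-up procedure iff its sorted position is below `j*`. -/
noncomputable def stepUpRejects {m : ℕ} (q : Fin m → ℝ) (lam : ℕ → ℝ) (i : Fin m) : Prop :=
  ∃ k : Fin m, Tuple.sort q k = i ∧ (k : ℕ) < stepUpIndex q lam

/-- If the step-up index is positive, it belongs to the defining set. -/
lemma stepUpIndex_mem {m : ℕ} (q : Fin m → ℝ) (lam : ℕ → ℝ)
    (h : 0 < stepUpIndex q lam) :
    ∃ hh : stepUpIndex q lam - 1 < m, 0 < stepUpIndex q lam ∧
      q (Tuple.sort q ⟨stepUpIndex q lam - 1, hh⟩) ≤ lam (stepUpIndex q lam) := by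
  set S := {j | ∃ h : j - 1 < m, 0 < j ∧ q (Tuple.sort q ⟨j - 1, h⟩) ≤ lam j} with hS
  have hbdd : BddAbove S := by
    refine ⟨m, fun j hj => ?_⟩
    obtain ⟨h1, h2, _⟩ := hj
    omega
  have hne : S.Nonempty := by
    by_contra hc
    rw [Set.not_nonempty_iff_eq_empty] at hc
    rw [stepUpIndex, ← hS, hc] at h
    simp at h
  exact Nat.sSup_mem hne hbdd

/-- A rejected index has p-value at most `lam j*`. -/
lemma stepUpRejects_le {m : ℕ} (q : Fin m → ℝ) (lam : ℕ → ℝ) (i : Fin m)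
    (h : stepUpRejects q lam i) :
    0 < stepUpIndex q lam ∧ stepUpIndex q lam ≤ m ∧ q i ≤ lam (stepUpIndex q lam) := by
  obtain ⟨k, hk, hklt⟩ := h
  have hpos : 0 < stepUpIndex q lam := by omega
  obtain ⟨hh, _, hle⟩ := stepUpIndex_mem q lam hpos
  refine ⟨hpos, by omega, ?_⟩
  have hmono := Tuple.monotone_sort q
  have hkle : k ≤ (⟨stepUpIndex q lam - 1, hh⟩ : Fin m) := by
    rw [Fin.le_def]
    simp only []
    omega
  calc q i = (q ∘ Tuple.sort q) k := by rw [Function.comp_apply, hk]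
    _ ≤ (q ∘ Tuple.sort q) ⟨stepUpIndex q lam - 1, hh⟩ := hmono hkle
    _ ≤ lam (stepUpIndex q lam) := hle

/-- Benjamini–Yekutieli under arbitrary dependence: with thresholds
`λ_j = αj/(m·H_m)`, `H_m = ∑_{l=1}^m 1/l`, applied as a step-up rule to values with
super uniform nulls, the FDR is at most `(m₀/m)·α`. -/
theorem stmt_4 {Ω : Type*} [MeasureSpace Ω] [IsProbabilityMeasure (ℙ : Measure Ω)]
    {m : ℕ} (hm : 0 < m) (p : Fin m → Ω → ℝ) (S₀ : Finset (Fin m))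
    (α : ℝ) (hα : α ∈ Set.Ioo (0 : ℝ) 1)
    (hmeas : ∀ j, Measurable (p j))
    (hrange : ∀ j ω, p j ω ∈ Set.Icc (0 : ℝ) 1)
    (hnull : ∀ j ∈ S₀, ∀ t ∈ Set.Icc (0 : ℝ) 1,
      ℙ {ω | p j ω ≤ t} ≤ ENNReal.ofReal t)
    (lam : ℕ → ℝ)
    (hlam : ∀ j, lam j = α * j / (m * ∑ l ∈ Finset.Icc 1 m, (1 : ℝ) / l)) :
    ∫ ω, ((Set.ncard {i : Fin m | i ∈ S₀ ∧ stepUpRejects (fun j => p j ω) lam i} : ℝ) /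
        ((max (stepUpIndex (fun j => p j ω) lam) 1 : ℕ) : ℝ)) ∂ℙ ≤
      (S₀.card : ℝ) / m * α := by
  classical
  obtain ⟨hα0, hα1⟩ := hα
  set H : ℝ := ∑ l ∈ Finset.Icc 1 m, (1 : ℝ) / l with hH
  have hH1 : (1 : ℝ) ≤ H := by
    rw [hH]
    have h1m : (1 : ℕ) ∈ Finset.Icc 1 m := by simp only [Finset.mem_Icc]; omega
    have := Finset.single_le_sum (f := fun l : ℕ => (1 : ℝ) / l)
      (fun i _ => by positivity) h1m
    simpa using this
  have hH0 : (0 : ℝ) < H := by linarith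
  have hm0 : (0 : ℝ) < m := by exact_mod_cast hm
  set c : ℝ := α / (m * H) with hc
  have hc0 : 0 < c := by positivity
  have hlam' : ∀ k, lam k = c * k := by
    intro k; rw [hlam, hc]; ring
  have hlam_mono : Monotone lam := by
    intro a b hab
    rw [hlam' a, hlam' b]
    exact mul_le_mul_of_nonneg_left (by exact_mod_cast hab) hc0.le
  have hlam_mem : ∀ k ≤ m, lam k ∈ Set.Icc (0 : ℝ) 1 := by
    intro k hk
    constructor
    · rw [hlam' k]; positivity
    · have h1 : lam k ≤ lam m := hlam_mono hk
      have h2 : lam m = α / H := by rw [hlam' m, hc]; field_simp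
      have h3 : α / H ≤ α := by
        rw [div_le_iff₀ hH0]; nlinarith
      linarith
  -- the sets A j k and the dominating function g
  set A : Fin m → ℕ → Set Ω := fun j k =>
    {ω | p j ω ≤ lam k ∧ (k ≤ 1 ∨ lam (k - 1) < p j ω)} with hA
  have hAmeas : ∀ j k, MeasurableSet (A j k) := by
    intro j k
    have h1 : MeasurableSet {ω | p j ω ≤ lam k} :=
      measurableSet_le (hmeas j) measurable_const
    have h2 : MeasurableSet {ω | k ≤ 1 ∨ lam (k - 1) < p j ω} := by
      by_cases hk : k ≤ 1
      · simp [hk]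
      · have : {ω | k ≤ 1 ∨ lam (k - 1) < p j ω} = {ω | lam (k - 1) < p j ω} := by
          ext ω; simp [hk]
        rw [this]
        exact measurableSet_lt measurable_const (hmeas j)
    exact h1.inter h2
  set g : Ω → ℝ := fun ω => ∑ j ∈ S₀, ∑ k ∈ Finset.Icc 1 m,
    (A j k).indicator (fun _ => (1 : ℝ) / k) ω with hg
  have hint : Integrable g ℙ := by
    apply integrable_finset_sum
    intro j _
    apply integrable_finset_sum
    intro k _
    exact (integrable_const _).indicator (hAmeas j k)
  have hg_nonneg : ∀ ω, 0 ≤ g ω := by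
    intro ω
    apply Finset.sum_nonneg; intro j _
    apply Finset.sum_nonneg; intro k _
    exact Set.indicator_nonneg (fun _ _ => by positivity) ω
  -- pointwise bound
  have hpoint : ∀ ω,
      ((Set.ncard {i : Fin m | i ∈ S₀ ∧ stepUpRejects (fun j => p j ω) lam i} : ℝ) /
        ((max (stepUpIndex (fun j => p j ω) lam) 1 : ℕ) : ℝ)) ≤ g ω := by
    intro ω
    set q : Fin m → ℝ := fun j => p j ω with hq
    set J := stepUpIndex q lam with hJ
    set T : Finset (Fin m) := S₀.filter (fun i => stepUpRejects q lam i) with hT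
    have hset : {i : Fin m | i ∈ S₀ ∧ stepUpRejects q lam i} = ↑T := by
      ext i; simp [hT]
    rw [hset, Set.ncard_coe_finset]
    by_cases hJ0 : J = 0
    · have hTe : T = ∅ := by
        rw [hT, Finset.filter_eq_empty_iff]
        intro i _ hr
        obtain ⟨k, _, hklt⟩ := hr
        omega
      rw [hTe]
      simpa using hg_nonneg ω
    · have hJpos : 0 < J := Nat.pos_of_ne_zero hJ0
      have hmax : max J 1 = J := by omega
      rw [hmax]
      have hJR : (0 : ℝ) < J := by exact_mod_cast hJpos
      -- each rejected null contributes at least 1/J to its inner sum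
      have hkey : ∀ i ∈ T, (1 : ℝ) / J ≤
          ∑ k ∈ Finset.Icc 1 m, (A i k).indicator (fun _ => (1 : ℝ) / k) ω := by
        intro i hi
        rw [hT, Finset.mem_filter] at hi
        obtain ⟨_, hrej⟩ := hi
        obtain ⟨_, hJm, hple⟩ := stepUpRejects_le q lam i hrej
        -- minimal k with p i ω ≤ lam k
        set K := sInf {k | 1 ≤ k ∧ p i ω ≤ lam k} with hK
        have hne : {k | 1 ≤ k ∧ p i ω ≤ lam k}.Nonempty := ⟨J, hJpos, hple⟩
        have hKmem := Nat.sInf_mem hne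
        obtain ⟨hK1, hKle⟩ := hKmem
        have hKJ : K ≤ J := Nat.sInf_le ⟨hJpos, hple⟩
        have hωA : ω ∈ A i K := by
          refine ⟨hKle, ?_⟩
          by_cases h1 : K ≤ 1
          · exact Or.inl h1
          · right
            by_contra hcon
            push_neg at hcon
            have : K - 1 ∈ {k | 1 ≤ k ∧ p i ω ≤ lam k} := ⟨by omega, hcon⟩
            have := Nat.sInf_le this
            omega
        have hKm : K ∈ Finset.Icc 1 m := by
          simp only [Finset.mem_Icc]
          omega
        have hterm : (A i K).indicator (fun _ => (1 : ℝ) / K) ω = 1 / K :=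
          Set.indicator_of_mem hωA _
        have hsingle := Finset.single_le_sum
          (f := fun k : ℕ => (A i k).indicator (fun _ => (1 : ℝ) / k) ω)
          (fun k _ => Set.indicator_nonneg (fun _ _ => by positivity) ω) hKm
        have hKR : (0 : ℝ) < K := by exact_mod_cast hK1
        have h1K : (1 : ℝ) / J ≤ 1 / K := by
          apply one_div_le_one_div_of_le hKR
          exact_mod_cast hKJ
        calc (1 : ℝ) / J ≤ 1 / K := h1K
          _ = (A i K).indicator (fun _ => (1 : ℝ) / K) ω := hterm.symm
          _ ≤ _ := hsingle
      have hTS : T ⊆ S₀ := Finset.filter_subset _ _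
      calc (T.card : ℝ) / J = ∑ _i ∈ T, (1 : ℝ) / J := by
            rw [Finset.sum_const]
            simp [div_eq_mul_inv]
        _ ≤ ∑ i ∈ T, ∑ k ∈ Finset.Icc 1 m,
            (A i k).indicator (fun _ => (1 : ℝ) / k) ω :=
            Finset.sum_le_sum hkey
        _ ≤ g ω := by
            rw [hg]
            apply Finset.sum_le_sum_of_subset_of_nonneg hTS
            intro j _ _
            apply Finset.sum_nonneg; intro k _
            exact Set.indicator_nonneg (fun _ _ => by positivity) ω
  -- the integral of g
  have hintg : ∫ ω, g ω ∂ℙ ≤ (S₀.card : ℝ) / m * α := by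
    rw [hg, integral_finset_sum _ (fun j _ => integrable_finset_sum _
      (fun k _ => (integrable_const _).indicator (hAmeas j k)))]
    have hj_bound : ∀ j ∈ S₀,
        ∫ ω, (∑ k ∈ Finset.Icc 1 m, (A j k).indicator (fun _ => (1 : ℝ) / k) ω) ∂ℙ
          ≤ α / m := by
      intro j hj
      rw [integral_finset_sum _ (fun k _ => (integrable_const _).indicator (hAmeas j k))]
      set a : ℕ → ℝ := fun k => (ℙ {ω | p j ω ≤ lam k}).toReal with ha
      have hab : ∀ k, 1 ≤ k → k ≤ m → a k ≤ c * k := by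
        intro k hk1 hkm
        have := hnull j hj (lam k) (hlam_mem k hkm)
        have h2 : (ℙ {ω | p j ω ≤ lam k}).toReal ≤ (ENNReal.ofReal (lam k)).toReal :=
          ENNReal.toReal_mono ENNReal.ofReal_ne_top this
        rw [ENNReal.toReal_ofReal (hlam_mem k hkm).1] at h2
        rw [ha]
        calc (ℙ {ω | p j ω ≤ lam k}).toReal ≤ lam k := h2
          _ = c * k := hlam' k
      -- compute each integral
      have hterm : ∀ k ∈ Finset.Icc 1 m,
          ∫ ω, (A j k).indicator (fun _ => (1 : ℝ) / k) ω ∂ℙ =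
            (ℙ (A j k)).toReal * (1 / k) := by
        intro k _
        rw [integral_indicator_const _ (hAmeas j k)]
        simp [smul_eq_mul, measureReal_def]
      rw [Finset.sum_congr rfl hterm]
      -- split off k = 1
      have hsplit : Finset.Icc 1 m = insert 1 (Finset.Icc 2 m) := by
        ext x
        simp only [Finset.mem_Icc, Finset.mem_insert]
        omega
      have hA1 : A j 1 = {ω | p j ω ≤ lam 1} := by
        ext ω; simp [hA]
      have hAk : ∀ k, 2 ≤ k → (ℙ (A j k)).toReal = a k - a (k - 1) := by
        intro k hk2
        have hdiff : A j k = {ω | p j ω ≤ lam k} \ {ω | p j ω ≤ lam (k - 1)} := by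
          ext ω
          simp only [hA, Set.mem_setOf_eq, Set.mem_diff, not_le]
          constructor
          · rintro ⟨h1, h2 | h3⟩
            · omega
            · exact ⟨h1, h3⟩
          · rintro ⟨h1, h3⟩; exact ⟨h1, Or.inr h3⟩
        have hsub : {ω | p j ω ≤ lam (k - 1)} ⊆ {ω | p j ω ≤ lam k} := by
          intro ω hω
          exact le_trans hω (hlam_mono (by omega : k - 1 ≤ k))
        rw [hdiff, measure_diff hsub
          (measurableSet_le (hmeas j) measurable_const).nullMeasurableSet
          (measure_ne_top _ _),
          ENNReal.toReal_sub_of_le (measure_mono hsub) (measure_ne_top _ _)]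
      calc ∑ k ∈ Finset.Icc 1 m, (ℙ (A j k)).toReal * (1 / k)
          = (ℙ (A j 1)).toReal * (1 / 1) +
            ∑ k ∈ Finset.Icc 2 m, (ℙ (A j k)).toReal * (1 / k) := by
            rw [hsplit, Finset.sum_insert (by simp)]
            norm_num
        _ = a 1 + ∑ k ∈ Finset.Icc 2 m, (a k - a (k - 1)) / k := by
            rw [hA1]
            congr 1
            · rw [ha]; norm_num
            · apply Finset.sum_congr rfl
              intro k hk
              rw [Finset.mem_Icc] at hk
              rw [hAk k hk.1]
              ring
        _ ≤ c * H := by_abel c a m hm hab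
        _ = α / m := by
            rw [hc]
            field_simp
    calc ∑ j ∈ S₀, ∫ ω, (∑ k ∈ Finset.Icc 1 m,
          (A j k).indicator (fun _ => (1 : ℝ) / k) ω) ∂ℙ
        ≤ ∑ _j ∈ S₀, α / m := Finset.sum_le_sum hj_bound
      _ = S₀.card * (α / m) := by rw [Finset.sum_const]; simp [mul_comm]
      _ = (S₀.card : ℝ) / m * α := by ring
  -- conclude
  refine le_trans (integral_mono_of_nonneg ?_ hint ?_) hintg
  · exact Filter.Eventually.of_forall (fun ω => by positivity)
  · exact Filter.Eventually.of_forall hpoint
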